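/- Fix integers k ≥ 1 and c ≥ 1 and set α_pat(k) = 100·2^{ck} and α_long(k) = 10^4·2^{ck}. Let H be a graph, Z a set of vertices of H, and R a Steiner tree for Z in H that has no detour. Let P be a long maximal degree-2 path of R with endpoint u. Then every path in H with one endpoint in A_{R,P,u} and the other endpoint in B_{R,P,u} has at least α_pat(k)/2 = 50·2^{ck} edges; that is, dist_H(A_{R,P,u}, B_{R,P,u}) ≥ |E(P'_u)| − |E(P''_u)|. -/

import Mathlib

open SimpleGraph

/-- The degree of a vertex in a subgraph: the number of its neighbours in the subgraph. -/
noncomputable def degN {V : Type*} {H : SimpleGraph V} (R : H.Subgraph) (v : V) : ℕ :=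
  (R.neighborSet v).ncard

/-- `R` is a Steiner tree for `Z` in `H`: a subtree of `H` whose set of leaves
(vertices of degree exactly `1`) is exactly `Z`. -/
def IsSteinerTree {V : Type*} (H : SimpleGraph V) (Z : Set V) (R : H.Subgraph) : Prop :=
  R.coe.IsTree ∧ {v : V | degN R v = 1} = Z

/-- `u`, `v` and the path `P` witness a detour of the subtree `R` of `H`.  Here `Q` is the
unique path of `R` between `u` and `v` (expressed as a path of `H` all of whose vertices and
edges lie in `R`); `u` and `v` are vertices of degree `1` or `≥ 3` of `R` that are near each
other (no internal vertex of `Q` has degree `≥ 3` in `R`); `P` is a path of `H` that is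
strictly shorter than `Q`, with one endpoint in the connected component of
`R − (V(Q) \ {u,v})` containing `u` and the other endpoint in the component containing `v`. -/
def DetourWitness {V : Type*} (H : SimpleGraph V) (R : H.Subgraph)
    {u v a b : V} (Q : H.Walk u v) (P : H.Walk a b) : Prop :=
  u ≠ v ∧
  (degN R u = 1 ∨ 3 ≤ degN R u) ∧
  (degN R v = 1 ∨ 3 ≤ degN R v) ∧
  Q.IsPath ∧ Q.toSubgraph ≤ R ∧
  (∀ w ∈ Q.support, w ≠ u → w ≠ v → degN R w < 3) ∧
  P.IsPath ∧
  P.length < Q.length ∧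
  (∃ (ha : a ∈ (R.deleteVerts {w : V | w ∈ Q.support ∧ w ≠ u ∧ w ≠ v}).verts)
      (hu : u ∈ (R.deleteVerts {w : V | w ∈ Q.support ∧ w ≠ u ∧ w ≠ v}).verts),
      (R.deleteVerts {w : V | w ∈ Q.support ∧ w ≠ u ∧ w ≠ v}).coe.Reachable ⟨a, ha⟩ ⟨u, hu⟩) ∧
  (∃ (hb : b ∈ (R.deleteVerts {w : V | w ∈ Q.support ∧ w ≠ u ∧ w ≠ v}).verts)
      (hv : v ∈ (R.deleteVerts {w : V | w ∈ Q.support ∧ w ≠ u ∧ w ≠ v}).verts),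
      (R.deleteVerts {w : V | w ∈ Q.support ∧ w ≠ u ∧ w ≠ v}).coe.Reachable ⟨b, hb⟩ ⟨v, hv⟩)

/-- `u`, `v` and `P` witness a detour of `R` compactly: in addition, `P` has no internal
vertex from `(V(R) \ V(Q)) ∪ {u, v}` and its endpoints are not leaves of `R` other than
possibly `u` or `v`. -/
def CompactDetourWitness {V : Type*} (H : SimpleGraph V) (R : H.Subgraph)
    {u v a b : V} (Q : H.Walk u v) (P : H.Walk a b) : Prop :=
  DetourWitness H R Q P ∧
  (∀ w ∈ P.support, w ≠ a → w ≠ b →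
    w ∉ ((R.verts \ {x : V | x ∈ Q.support}) ∪ {u, v})) ∧
  a ∉ ({x : V | degN R x = 1} \ {u, v}) ∧
  b ∉ ({x : V | degN R x = 1} \ {u, v})

/-- The subtree `R` of `H` has a detour. -/
def HasDetour {V : Type*} (H : SimpleGraph V) (R : H.Subgraph) : Prop :=
  ∃ (u v a b : V) (Q : H.Walk u v) (P : H.Walk a b), DetourWitness H R Q P

/-- For a walk `Q` (the long maximal degree-2 path of `R`, oriented away from its endpoint
`u`) and `n` (= `α_pat(k)`), this is the set `A_{R,Q,u}`: the union of the set of the `n / 2`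
vertices of `Q` closest to `u` (the vertex set of `P''_u`) with the vertex set of the
connected component of `R − (V(P'_u) \ {u})` containing `u`, where `P'_u` consists of the
`n` vertices of `Q` closest to `u`. -/
def sideA {V : Type*} (H : SimpleGraph V) (R : H.Subgraph) {u v : V}
    (Q : H.Walk u v) (n : ℕ) : Set V :=
  {w : V | w ∈ Q.support.take (n / 2)} ∪
  {w : V | ∃ (hw : w ∈ (R.deleteVerts ({x : V | x ∈ Q.support.take n} \ {u})).verts)
      (hu : u ∈ (R.deleteVerts ({x : V | x ∈ Q.support.take n} \ {u})).verts),
      (R.deleteVerts ({x : V | x ∈ Q.support.take n} \ {u})).coe.Reachable ⟨w, hw⟩ ⟨u, hu⟩}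

/-- The set `B_{R,Q,u} = V(R) \ (A_{R,Q,u} ∪ V(P'_u))`. -/
def sideB {V : Type*} (H : SimpleGraph V) (R : H.Subgraph) {u v : V}
    (Q : H.Walk u v) (n : ℕ) : Set V :=
  R.verts \ (sideA H R Q n ∪ {w : V | w ∈ Q.support.take n})

section AuxiliaryLemmas

open Walk

variable {V : Type*}

private lemma aux_length_takeUntil_start [DecidableEq V] {G : SimpleGraph V} {a b : V}
    (p : G.Walk a b) (h : a ∈ p.support) : (p.takeUntil a h).length = 0 := by
  have hc := p.count_support_takeUntil_eq_one h
  generalize p.takeUntil a h = w at hc ⊢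
  cases w with
  | nil => simp
  | cons h' q =>
    exfalso
    rw [Walk.support_cons, List.count_cons_self] at hc
    have : a ∈ q.support := q.end_mem_support
    have := List.count_pos_iff.mpr this
    omega

private lemma aux_takeUntil_lt_of_mem_take [DecidableEq V] {G : SimpleGraph V} {a b : V}
    (p : G.Walk a b) : ∀ (m : ℕ) (x : V), x ∈ p.support.take m → ∀ (hx : x ∈ p.support),
      (p.takeUntil x hx).length < m := by
  induction p with
  | nil =>
    intro m x hm hx
    have h0 : 0 < m := by
      rcases Nat.eq_zero_or_pos m with h | h
      · subst h; simp at hm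
      · exact h
    have hle := Walk.length_takeUntil_le Walk.nil hx
    simp only [Walk.length_nil, Nat.le_zero] at hle
    omega
  | cons h q ih =>
    intro m x hm hx
    rename_i a' c b'
    have h0 : 0 < m := by
      rcases Nat.eq_zero_or_pos m with h' | h'
      · subst h'; simp at hm
      · exact h'
    by_cases hax : a' = x
    · subst hax
      rw [aux_length_takeUntil_start]
      exact h0
    · have hx2 := hx
      rw [Walk.support_cons, List.mem_cons] at hx2
      have hxq : x ∈ q.support := by
        rcases hx2 with h' | h'
        · exact absurd h'.symm hax
        · exact h'
      have hmq : x ∈ q.support.take (m - 1) := by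
        obtain ⟨m', rfl⟩ : ∃ m', m = m' + 1 := ⟨m - 1, by omega⟩
        rw [Walk.support_cons, List.take_succ_cons] at hm
        rcases List.mem_cons.mp hm with h' | h'
        · exact absurd h'.symm hax
        · simpa using h'
      have hlen := ih (m - 1) x hmq hxq
      have heq : (Walk.cons h q).takeUntil x hx = Walk.cons h (q.takeUntil x hxq) := by
        simp [Walk.takeUntil, hax]
      rw [heq, Walk.length_cons]
      omega

private lemma aux_le_takeUntil_of_not_mem_take [DecidableEq V] {G : SimpleGraph V} {a b : V}
    (p : G.Walk a b) : ∀ (m : ℕ) (x : V), x ∉ p.support.take m → ∀ (hx : x ∈ p.support),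
      m ≤ (p.takeUntil x hx).length := by
  induction p with
  | nil =>
    intro m x hm hx
    rw [Walk.mem_support_nil_iff] at hx
    subst hx
    rcases Nat.eq_zero_or_pos m with h | h
    · omega
    · exfalso
      apply hm
      obtain ⟨m', rfl⟩ : ∃ m', m = m' + 1 := ⟨m - 1, by omega⟩
      simp
  | cons h q ih =>
    intro m x hm hx
    rename_i a' c b'
    rcases Nat.eq_zero_or_pos m with h0 | h0
    · omega
    obtain ⟨m', rfl⟩ : ∃ m', m = m' + 1 := ⟨m - 1, by omega⟩
    rw [Walk.support_cons, List.take_succ_cons] at hm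
    have hax : a' ≠ x := fun he => hm (by simp [he])
    have hx2 := hx
    rw [Walk.support_cons, List.mem_cons] at hx2
    have hxq : x ∈ q.support := by
      rcases hx2 with h' | h'
      · exact absurd h'.symm hax
      · exact h'
    have hmq : x ∉ q.support.take m' := fun hc => hm (List.mem_cons_of_mem _ hc)
    have hlen := ih m' x hmq hxq
    have heq : (Walk.cons h q).takeUntil x hx = Walk.cons h (q.takeUntil x hxq) := by
      simp [Walk.takeUntil, hax]
    rw [heq, Walk.length_cons]
    omega

private lemma aux_mem_take_head {α : Type*} (a : α) (l : List α) {n : ℕ} (h : 1 ≤ n) :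
    a ∈ (a :: l).take n := by
  obtain ⟨n', rfl⟩ : ∃ n', n = n' + 1 := ⟨n - 1, by omega⟩
  rw [List.take_succ_cons]
  exact List.mem_cons_self

/-- Convert an `H`-walk whose vertices and edges lie in `R` into a walk of `R.coe`. -/
private lemma aux_exists_coe_walk {H : SimpleGraph V} {R : H.Subgraph} {a b : V} (p : H.Walk a b)
    (hs : ∀ z ∈ p.support, z ∈ R.verts) (he : ∀ e ∈ p.edges, e ∈ R.edgeSet) :
    ∃ (ha : a ∈ R.verts) (hb : b ∈ R.verts) (q : R.coe.Walk ⟨a, ha⟩ ⟨b, hb⟩),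
      q.support.map Subtype.val = p.support := by
  induction p with
  | nil => exact ⟨hs _ (by simp), hs _ (by simp), Walk.nil, by simp⟩
  | cons h p ih =>
    rename_i a' c' b'
    obtain ⟨hc, hb, q, hq⟩ := ih (fun z hz => hs z (by simp [hz]))
      (fun e hee => he e (by simp [hee]))
    have ha : a' ∈ R.verts := hs a' (by simp)
    have hadj : R.coe.Adj ⟨a', ha⟩ ⟨c', hc⟩ := by
      rw [Subgraph.coe_adj]
      exact (Subgraph.mem_edgeSet).mp (he s(a', c') (by simp))
    exact ⟨ha, hb, Walk.cons hadj q, by simp [hq]⟩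

/-- Every `R`-neighbour of an internal vertex of the path `Q` (which has degree `< 3` in `R`)
lies on `Q`. -/
private lemma aux_internal_nbr_mem [Finite V] [DecidableEq V] {H : SimpleGraph V}
    {R : H.Subgraph} {u v : V}
    {Q : H.Walk u v} (hQp : Q.IsPath)
    (hedg : ∀ e ∈ Q.edges, e ∈ R.edgeSet)
    (hnear : ∀ w ∈ Q.support, w ≠ u → w ≠ v → (R.neighborSet w).ncard < 3)
    {s : V} (hs : s ∈ Q.support) (hsu : s ≠ u) (hsv : s ≠ v)
    {w : V} (hw : R.Adj s w) : w ∈ Q.support := by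
  set tk := Q.takeUntil s hs with htk
  set dr := Q.dropUntil s hs with hdr
  have htknil : ¬ tk.Nil := Walk.not_nil_of_ne (fun h => hsu h.symm)
  have hdrnil : ¬ dr.Nil := Walk.not_nil_of_ne hsv
  have htkrnil : ¬ tk.reverse.Nil := Walk.not_nil_of_ne hsu
  obtain ⟨c, hadj2, r2, hr2⟩ := Walk.not_nil_iff.mp hdrnil
  obtain ⟨d, hadj1, r1, hr1⟩ := Walk.not_nil_iff.mp htkrnil
  have hedge1 : s(s, d) ∈ tk.edges := by
    have : s(s, d) ∈ tk.reverse.edges := by rw [hr1]; simp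
    rwa [Walk.edges_reverse, List.mem_reverse] at this
  have hedge2 : s(s, c) ∈ dr.edges := by rw [hr2]; simp
  have hRd : R.Adj s d := (Subgraph.mem_edgeSet).mp
    (hedg _ (Q.edges_takeUntil_subset hs hedge1))
  have hRc : R.Adj s c := (Subgraph.mem_edgeSet).mp
    (hedg _ (Q.edges_dropUntil_subset hs hedge2))
  have hdtk : d ∈ tk.support := by
    have : d ∈ tk.reverse.support := by rw [hr1]; simp [Walk.support_cons]
    rwa [Walk.support_reverse, List.mem_reverse] at this
  have hcdr : c ∈ dr.support.tail := by
    rw [hr2, Walk.support_cons, List.tail_cons]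
    exact r2.start_mem_support
  have hsplit : Q.support = tk.support ++ dr.support.tail := by
    conv_lhs => rw [← Q.take_spec hs]
    rw [Walk.support_append]
  have hnodup : Q.support.Nodup := hQp.support_nodup
  have hdc : d ≠ c := by
    rw [hsplit, List.nodup_append] at hnodup
    exact fun h => hnodup.2.2 d hdtk c hcdr h
  have hdQ : d ∈ Q.support := Q.support_takeUntil_subset hs hdtk
  have hcQ : c ∈ Q.support := Q.support_dropUntil_subset hs (List.mem_of_mem_tail hcdr)
  by_contra hwQ
  have hwd : w ≠ d := fun h => hwQ (h ▸ hdQ)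
  have hwc : w ≠ c := fun h => hwQ (h ▸ hcQ)
  have hsub : ({w, d, c} : Set V) ⊆ R.neighborSet s := by
    intro z hz
    rcases hz with rfl | rfl | rfl
    · exact hw
    · exact hRd
    · exact hRc
  have hcard : ({w, d, c} : Set V).ncard = 3 := by
    rw [Set.ncard_insert_of_notMem (by simp [hwd, hwc]) (Set.toFinite _),
      Set.ncard_pair hdc]
  have h1 := Set.ncard_le_ncard hsub (Set.toFinite _)
  have h2 := hnear s hs hsu hsv
  omega

/-- Any vertex outside the "internal" set `S` that is connected in `R` to `u` or `v`
reaches `u` or `v` in `R` minus `S`. -/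
private lemma aux_claimC {H : SimpleGraph V} {R : H.Subgraph} {S : Set V} {u v : V}
    (hS : ∀ s ∈ S, ∀ w, R.Adj s w → w ∉ S → w = u ∨ w = v)
    (huD : u ∈ (R.deleteVerts S).verts) (hvD : v ∈ (R.deleteVerts S).verts) :
    ∀ {w t : ↑R.verts} (p : R.coe.Walk w t), ((t : V) = u ∨ (t : V) = v) → (w : V) ∉ S →
      (∃ hw, (R.deleteVerts S).coe.Reachable ⟨(w : V), hw⟩ ⟨u, huD⟩) ∨
      (∃ hw, (R.deleteVerts S).coe.Reachable ⟨(w : V), hw⟩ ⟨v, hvD⟩) := by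
  intro w t p
  induction p with
  | nil =>
    rename_i a
    intro ht hw
    rcases ht with h | h
    · left
      refine ⟨⟨a.2, hw⟩, ?_⟩
      have he : (⟨(a : V), ⟨a.2, hw⟩⟩ : ((R.deleteVerts S).verts : Set V)) = ⟨u, huD⟩ :=
        Subtype.ext h
      rw [he]
    · right
      refine ⟨⟨a.2, hw⟩, ?_⟩
      have he : (⟨(a : V), ⟨a.2, hw⟩⟩ : ((R.deleteVerts S).verts : Set V)) = ⟨v, hvD⟩ :=
        Subtype.ext h
      rw [he]
  | cons h q ih =>
    rename_i w₁ w₂ t'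
    intro ht hw
    have hR12 : R.Adj (w₁ : V) (w₂ : V) := by simpa using h
    by_cases hw₂ : (w₂ : V) ∈ S
    · rcases hS _ hw₂ _ hR12.symm hw with hcase | hcase
      · left
        refine ⟨⟨w₁.2, hw⟩, ?_⟩
        have he : (⟨(w₁ : V), ⟨w₁.2, hw⟩⟩ : ((R.deleteVerts S).verts : Set V)) = ⟨u, huD⟩ :=
          Subtype.ext hcase
        rw [he]
      · right
        refine ⟨⟨w₁.2, hw⟩, ?_⟩
        have he : (⟨(w₁ : V), ⟨w₁.2, hw⟩⟩ : ((R.deleteVerts S).verts : Set V)) = ⟨v, hvD⟩ :=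
          Subtype.ext hcase
        rw [he]
    · have hadjD : (R.deleteVerts S).coe.Adj ⟨(w₁ : V), ⟨w₁.2, hw⟩⟩ ⟨(w₂ : V), ⟨w₂.2, hw₂⟩⟩ := by
        rw [Subgraph.coe_adj]
        exact Subgraph.deleteVerts_adj.mpr ⟨w₁.2, hw, w₂.2, hw₂, hR12⟩
      rcases ih ht hw₂ with ⟨hw', r⟩ | ⟨hw', r⟩
      · exact Or.inl ⟨⟨w₁.2, hw⟩, hadjD.reachable.trans r⟩
      · exact Or.inr ⟨⟨w₁.2, hw⟩, hadjD.reachable.trans r⟩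

/-- In the tree `R`, any walk of `R.coe` from a vertex `s` of `Q` that is far along `Q`
back to `u` must pass through one of the first `n` vertices of `Q` (other than `u`). -/
private lemma aux_uniq2 [DecidableEq V] {H : SimpleGraph V} {R : H.Subgraph}
    (hT : R.coe.IsTree) {u v : V} {Q : H.Walk u v} (hQp : Q.IsPath)
    (hsup : ∀ z ∈ Q.support, z ∈ R.verts) (hedg : ∀ e ∈ Q.edges, e ∈ R.edgeSet)
    {n : ℕ} (hn2 : 2 ≤ n) {s : V} (hs : s ∈ Q.support) (hsn : s ∉ Q.support.take n)
    {hsR : s ∈ R.verts} {huR : u ∈ R.verts} (p : R.coe.Walk ⟨s, hsR⟩ ⟨u, huR⟩) :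
    ∃ z ∈ p.support, (z : V) ∈ Q.support.take n ∧ (z : V) ≠ u := by
  set tk := Q.takeUntil s hs with htkdef
  have hlen : n ≤ tk.length := aux_le_takeUntil_of_not_mem_take Q n s hsn hs
  have hsu : s ≠ u := by
    intro h; subst h
    apply hsn
    rw [Q.support_eq_cons]
    exact aux_mem_take_head _ _ (by omega)
  have htknil : ¬ tk.Nil := Walk.not_nil_of_ne (fun h => hsu h.symm)
  obtain ⟨z₀, hadj, r, hr⟩ := Walk.not_nil_iff.mp htknil
  have hz₀tk : z₀ ∈ tk.support.take n := by
    rw [hr, Walk.support_cons]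
    obtain ⟨n', rfl⟩ : ∃ n', n = n' + 2 := ⟨n - 2, by omega⟩
    rw [List.take_succ_cons, r.support_eq_cons, List.take_succ_cons]
    simp
  have htksplit : Q.support = tk.support ++ (Q.dropUntil s hs).support.tail := by
    conv_lhs => rw [← Q.take_spec hs]
    rw [Walk.support_append]
  have htake : Q.support.take n = tk.support.take n := by
    rw [htksplit, List.take_append_of_le_length]
    rw [Walk.length_support]
    omega
  have hz₀take : z₀ ∈ Q.support.take n := htake ▸ hz₀tk
  have hz₀u : z₀ ≠ u := by
    have hnd : tk.support.Nodup := (hQp.takeUntil hs).support_nodup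
    rw [hr, Walk.support_cons] at hnd
    intro h; subst h
    exact (List.nodup_cons.mp hnd).1 r.start_mem_support
  obtain ⟨hu', hs', tkc, hmap⟩ := aux_exists_coe_walk tk
    (fun z hz => hsup z (Q.support_takeUntil_subset hs hz))
    (fun e hee => hedg e (Q.edges_takeUntil_subset hs hee))
  have htkcp : tkc.IsPath := by
    rw [Walk.isPath_def]
    have hnd : (tkc.support.map Subtype.val).Nodup := by
      rw [hmap]; exact (hQp.takeUntil hs).support_nodup
    exact hnd.of_map
  have hequ : (⟨tkc, htkcp⟩ : R.coe.Path ⟨u, hu'⟩ ⟨s, hs'⟩) = p.reverse.toPath :=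
    hT.IsAcyclic.path_unique _ _
  have hz₀mem : z₀ ∈ tkc.support.map Subtype.val := by
    rw [hmap]
    exact List.mem_of_mem_take hz₀tk
  obtain ⟨z, hzmem, hzval⟩ := List.mem_map.mp hz₀mem
  have heqw : tkc = (p.reverse.toPath : R.coe.Walk _ _) := congrArg Subtype.val hequ
  have hz_in_p : z ∈ p.support := by
    have h1 := heqw ▸ hzmem
    have h2 := Walk.support_toPath_subset p.reverse h1
    rwa [Walk.support_reverse, List.mem_reverse] at h2
  exact ⟨z, hz_in_p, hzval ▸ hz₀take, hzval ▸ hz₀u⟩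

private lemma aux_map_support_avoid {V : Type*} {H : SimpleGraph V} {R : H.Subgraph} {T : Set V}
    {a b : ↑(R.deleteVerts T).verts} (p : (R.deleteVerts T).coe.Walk a b)
    {z : ↑R.verts}
    (hz : z ∈ (p.map (Subgraph.inclusion (Subgraph.deleteVerts_le))).support) :
    (z : V) ∉ T := by
  rw [Walk.support_map] at hz
  obtain ⟨z', hz', hzz⟩ := List.mem_map.mp hz
  have hval : (z : V) = (z' : V) := by rw [← hzz]; rfl
  rw [hval]
  exact z'.2.2

end AuxiliaryLemmas
/-- Let `R` be a Steiner tree with no detour and let `Q` be a long maximal degree-2 path of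
`R` with endpoint `u` (long: at least `α_long(k) = 10^4·2^(ck)` edges).  Then every path of
`H` with one endpoint in `A_{R,Q,u}` and the other in `B_{R,Q,u}` has at least
`α_pat(k)/2 = 50·2^(ck) = |E(P'_u)| - |E(P''_u)|` edges. -/
theorem stmt8 {V : Type*} [Fintype V] (H : SimpleGraph V) (Z : Set V)
    (k c : ℕ) (hk : 1 ≤ k) (hc : 1 ≤ c)
    (R : H.Subgraph) (hR : IsSteinerTree H Z R) (hnd : ¬ HasDetour H R)
    {u v : V} (Q : H.Walk u v) (hQp : Q.IsPath) (hQR : Q.toSubgraph ≤ R) (huv : u ≠ v)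
    (hu : degN R u = 1 ∨ 3 ≤ degN R u) (hv : degN R v = 1 ∨ 3 ≤ degN R v)
    (hnear : ∀ w ∈ Q.support, w ≠ u → w ≠ v → degN R w < 3)
    (hlong : 10 ^ 4 * 2 ^ (c * k) ≤ Q.length) :
    ∀ (x y : V) (W : H.Walk x y), W.IsPath →
      x ∈ sideA H R Q (100 * 2 ^ (c * k)) → y ∈ sideB H R Q (100 * 2 ^ (c * k)) →
      50 * 2 ^ (c * k) ≤ W.length := by
  classical
  intro x y W hW hx hy
  by_contra hlen
  push_neg at hlen
  have hpow : 1 ≤ 2 ^ (c * k) := Nat.one_le_two_pow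
  set n : ℕ := 100 * 2 ^ (c * k) with hndef
  have hn2 : 2 ≤ n := by omega
  have hQn : 100 * n ≤ Q.length := by
    have h4 : (10:ℕ) ^ 4 * 2 ^ (c * k) = 100 * n := by rw [hndef]; ring
    omega
  set S : Set V := {w : V | w ∈ Q.support ∧ w ≠ u ∧ w ≠ v} with hSdef
  set Tp : Set V := {x : V | x ∈ Q.support.take n} \ {u} with hTdef
  have hQsupR : ∀ z ∈ Q.support, z ∈ R.verts := fun z hz =>
    (Subgraph.verts_mono hQR) (Q.mem_verts_toSubgraph.mpr hz)
  have hQedgR : ∀ e ∈ Q.edges, e ∈ R.edgeSet := fun e he' =>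
    (Subgraph.edgeSet_mono hQR) (Q.mem_edges_toSubgraph.mpr he')
  have huR : u ∈ R.verts := hQsupR u Q.start_mem_support
  have hvR : v ∈ R.verts := hQsupR v Q.end_mem_support
  have huS : u ∉ S := fun h => h.2.1 rfl
  have hvS : v ∉ S := fun h => h.2.2 rfl
  have huD : u ∈ (R.deleteVerts S).verts := ⟨huR, huS⟩
  have hvD : v ∈ (R.deleteVerts S).verts := ⟨hvR, hvS⟩
  have hnear' : ∀ w ∈ Q.support, w ≠ u → w ≠ v → (R.neighborSet w).ncard < 3 := by
    intro w hw h1 h2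
    have h3 := hnear w hw h1 h2
    rwa [degN] at h3
  have hvtake : v ∉ Q.support.take n := by
    intro hvt
    have h1 := aux_takeUntil_lt_of_mem_take Q n v hvt Q.end_mem_support
    have h2 : (Q.dropUntil v Q.end_mem_support).IsPath := hQp.dropUntil _
    have h3 : (Q.dropUntil v Q.end_mem_support).length = 0 := by
      have hl := SimpleGraph.Path.loop_eq (⟨_, h2⟩ : H.Path v v)
      have he : Q.dropUntil v Q.end_mem_support = Walk.nil := congrArg Subtype.val hl
      rw [he]; rfl
    have h4 : Q.length = (Q.takeUntil v Q.end_mem_support).length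
        + (Q.dropUntil v Q.end_mem_support).length := by
      conv_lhs => rw [← Q.take_spec Q.end_mem_support]
      rw [Walk.length_append]
    omega
  have hTpS : Tp ⊆ S := by
    intro z hz
    obtain ⟨hz1, hz2⟩ := hz
    exact ⟨List.mem_of_mem_take hz1, fun h => hz2 h, fun h => hvtake (h ▸ hz1)⟩
  have hSnbr : ∀ s ∈ S, ∀ w, R.Adj s w → w ∉ S → w = u ∨ w = v := by
    intro s hsS w hadj hwS
    have hwQ : w ∈ Q.support :=
      aux_internal_nbr_mem hQp hQedgR hnear' hsS.1 hsS.2.1 hsS.2.2 hadj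
    by_contra hcon
    push_neg at hcon
    exact hwS ⟨hwQ, hcon.1, hcon.2⟩
  -- decompose the hypothesis on `y`
  have hy' : y ∈ R.verts ∧ y ∉ (sideA H R Q n ∪ {w : V | w ∈ Q.support.take n}) := hy
  obtain ⟨hyR, hyn⟩ := hy'
  have hyA : y ∉ sideA H R Q n := fun h => hyn (Set.mem_union_left _ h)
  have hytake : y ∉ Q.support.take n := fun h => hyn (Set.mem_union_right _ h)
  -- the `a`-side of the detour path
  obtain ⟨a, Wa, haD, hra, hWalen⟩ :
      ∃ (a : V) (Wa : H.Walk a y) (haD : a ∈ (R.deleteVerts S).verts),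
        (R.deleteVerts S).coe.Reachable ⟨a, haD⟩ ⟨u, huD⟩ ∧ Wa.length < n := by
    have hx' : x ∈ {w : V | w ∈ Q.support.take (n / 2)} ∨
        x ∈ {w : V | ∃ (hw : w ∈ (R.deleteVerts Tp).verts)
          (hu : u ∈ (R.deleteVerts Tp).verts),
          (R.deleteVerts Tp).coe.Reachable ⟨w, hw⟩ ⟨u, hu⟩} := hx
    rcases hx' with hx1 | hx2
    · have hx1' : x ∈ Q.support.take (n / 2) := hx1
      have hxs : x ∈ Q.support := List.mem_of_mem_take hx1'
      refine ⟨u, (Q.takeUntil x hxs).append W, huD, Reachable.refl _, ?_⟩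
      rw [Walk.length_append]
      have h1 := aux_takeUntil_lt_of_mem_take Q (n / 2) x hx1' hxs
      omega
    · obtain ⟨hw, hu', hreach⟩ := hx2
      obtain ⟨pd⟩ := hreach
      obtain ⟨pr, havoid⟩ : ∃ (pr : R.coe.Walk ⟨x, hw.1⟩ ⟨u, hu'.1⟩),
          ∀ z ∈ pr.support, (z : V) ∉ Tp :=
        ⟨pd.map (Subgraph.inclusion (Subgraph.deleteVerts_le)),
          fun z hz => aux_map_support_avoid pd hz⟩
      have hxS : x ∉ S := by
        intro hxS
        have hxn : x ∉ Q.support.take n := fun hc => hw.2 ⟨hc, fun h => hxS.2.1 h⟩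
        obtain ⟨zz, hzz, hzzT, hzzu⟩ :=
          aux_uniq2 hR.1 hQp hQsupR hQedgR hn2 hxS.1 hxn pr
        exact havoid zz hzz ⟨hzzT, hzzu⟩
      rcases aux_claimC hSnbr huD hvD pr (Or.inl rfl) hxS with ⟨hwD, rD⟩ | ⟨hwD, rD⟩
      · exact ⟨x, W, hwD, rD, by omega⟩
      · exfalso
        obtain ⟨pv⟩ := rD
        obtain ⟨full, hav2⟩ : ∃ (full : R.coe.Walk ⟨v, hvR⟩ ⟨u, hu'.1⟩),
            ∀ z ∈ full.support, (z : V) ∉ Tp := by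
          refine ⟨(pv.map (Subgraph.inclusion (Subgraph.deleteVerts_le))).reverse.append pr,
            fun z hz => ?_⟩
          replace hz := (Walk.mem_support_append_iff _ _).mp hz
          rcases hz with hz | hz
          · replace hz := List.mem_reverse.mp ((Walk.support_reverse _) ▸ hz)
            exact fun hc => aux_map_support_avoid pv hz (hTpS hc)
          · exact havoid z hz
        obtain ⟨zz, hzz, hzzT, hzzu⟩ :=
          aux_uniq2 hR.1 hQp hQsupR hQedgR hn2 Q.end_mem_support hvtake full
        exact hav2 zz hzz ⟨hzzT, hzzu⟩
  -- the `b`-side of the detour path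
  obtain ⟨b, Wb, hbD, hrb, hWblen⟩ :
      ∃ (b : V) (Wb : H.Walk y b) (hbD : b ∈ (R.deleteVerts S).verts),
        (R.deleteVerts S).coe.Reachable ⟨b, hbD⟩ ⟨v, hvD⟩ ∧ Wb.length + n ≤ Q.length := by
    by_cases hys : y ∈ Q.support
    · refine ⟨v, Q.dropUntil y hys, hvD, Reachable.refl _, ?_⟩
      have h4 : Q.length = (Q.takeUntil y hys).length + (Q.dropUntil y hys).length := by
        conv_lhs => rw [← Q.take_spec hys]
        rw [Walk.length_append]
      have h5 := aux_le_takeUntil_of_not_mem_take Q n y hytake hys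
      omega
    · have hyS : y ∉ S := fun h => hys h.1
      obtain ⟨p0⟩ := hR.1.isConnected.preconnected ⟨y, hyR⟩ ⟨u, huR⟩
      rcases aux_claimC hSnbr huD hvD p0 (Or.inl rfl) hyS with ⟨hwD, rD⟩ | ⟨hwD, rD⟩
      · exfalso
        apply hyA
        exact Set.mem_union_right _
          ⟨⟨hyR, fun hc => hytake hc.1⟩, ⟨huR, fun hc => hc.2 rfl⟩,
            rD.map (Subgraph.inclusion (Subgraph.deleteVerts_anti hTpS))⟩
      · refine ⟨y, Walk.nil, hwD, rD, ?_⟩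
        simp only [Walk.length_nil]
        omega
  -- assemble the detour
  apply hnd
  refine ⟨u, v, a, b, Q, (Wa.append Wb).bypass, huv, hu, hv, hQp, hQR, hnear,
    Walk.bypass_isPath _, ?_, ⟨haD, huD, hra⟩, ⟨hbD, hvD, hrb⟩⟩
  have h1 : (Wa.append Wb).bypass.length ≤ (Wa.append Wb).length := Walk.length_bypass_le _
  rw [Walk.length_append] at h1
  omega
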